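/- For every natural number n ≥ 1, n ∫₀¹ e^{(1−r²)/2} r^{n−1} dr ≤ 1 + 1/(n+1). -/

import Mathlib

lemma key_aux (r : ℝ) (h0 : 0 ≤ r) : r * Real.exp ((1 - r^2)/2) ≤ 1 := by
  rcases eq_or_lt_of_le h0 with h | h
  · rw [← h]; norm_num
  · have hl : Real.log (r^2) ≤ r^2 - 1 := Real.log_le_sub_one_of_pos (by positivity)
    rw [Real.log_pow] at hl
    push_cast at hl
    have h2 : (1 - r^2)/2 ≤ -Real.log r := by linarith
    calc r * Real.exp ((1 - r^2)/2) ≤ r * Real.exp (-Real.log r) :=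
          mul_le_mul_of_nonneg_left (Real.exp_le_exp.2 h2) h0
      _ = r * r⁻¹ := by rw [Real.exp_neg, Real.exp_log h]
      _ = 1 := mul_inv_cancel₀ h.ne'

theorem stmt9 (n : ℕ) (hn : 1 ≤ n) :
    (n:ℝ) * ∫ r in (0:ℝ)..1, Real.exp ((1 - r^2)/2) * r^(n-1) ≤ 1 + 1/((n:ℝ)+1) := by
  obtain ⟨m, rfl⟩ : ∃ m, n = m + 1 := ⟨n - 1, by omega⟩
  simp only [Nat.add_sub_cancel]
  set G : ℝ → ℝ := fun r => r^(m+1) * Real.exp ((1 - r^2)/2) + r^(m+2)/(m+2) with hGdef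
  set g : ℝ → ℝ := fun r =>
    ((m+1 : ℝ) * r^m * Real.exp ((1 - r^2)/2)
      + r^(m+1) * (Real.exp ((1 - r^2)/2) * (-r))) + r^(m+1) with hgdef
  have hG : ∀ r : ℝ, HasDerivAt G (g r) r := by
    intro r
    have h1 : HasDerivAt (fun r : ℝ => r^(m+1)) ((m+1 : ℝ) * r^m) r := by
      simpa using hasDerivAt_pow (m+1) r
    have hu : HasDerivAt (fun r : ℝ => (1 - r^2)/2) (-r) r := by
      have : HasDerivAt (fun r : ℝ => (1 - r^2)/2) ((0 - 2 * r)/2) r := by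
        apply HasDerivAt.div_const
        simpa using (hasDerivAt_pow 2 r).const_sub 1
      convert this using 1; ring
    have h2 : HasDerivAt (fun r : ℝ => Real.exp ((1 - r^2)/2))
        (Real.exp ((1 - r^2)/2) * (-r)) r := hu.exp
    have h3 : HasDerivAt (fun r : ℝ => r^(m+2)/(m+2)) (r^(m+1)) r := by
      have := (hasDerivAt_pow (m+2) r).div_const ((m:ℝ)+2)
      convert this using 1
      · rfl
      · rfl
      have hne : (m:ℝ)+2 ≠ 0 := by positivity
      push_cast
      field_simp
    exact (h1.mul h2).add h3
  have hgcont : Continuous g := by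
    apply Continuous.add
    · apply Continuous.add
      · exact (continuous_const.mul (continuous_pow m)).mul
          ((continuous_const.sub (continuous_pow 2)).div_const 2).rexp
      · exact (continuous_pow (m+1)).mul
          ((((continuous_const.sub (continuous_pow 2)).div_const 2).rexp).mul continuous_neg)
    · exact continuous_pow (m+1)
  have hfcont : Continuous fun r : ℝ => Real.exp ((1 - r^2)/2) * r^m :=
    (((continuous_const.sub (continuous_pow 2)).div_const 2).rexp).mul (continuous_pow m)
  have hmono : ∀ r ∈ Set.Icc (0:ℝ) 1,
      ((m:ℝ)+1) * (Real.exp ((1 - r^2)/2) * r^m) ≤ g r := by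
    intro r hr
    obtain ⟨hr0, hr1⟩ := hr
    have hkey := key_aux r hr0
    have hpow : (0:ℝ) ≤ r^(m+1) := by positivity
    have : 0 ≤ r^(m+1) * (1 - r * Real.exp ((1 - r^2)/2)) :=
      mul_nonneg hpow (by linarith)
    simp only [hgdef]
    nlinarith [this]
  have hint : ((m:ℝ)+1) * ∫ r in (0:ℝ)..1, Real.exp ((1 - r^2)/2) * r^m
      = ∫ r in (0:ℝ)..1, ((m:ℝ)+1) * (Real.exp ((1 - r^2)/2) * r^m) :=
    (intervalIntegral.integral_const_mul _ _).symm
  have hle : ∫ r in (0:ℝ)..1, ((m:ℝ)+1) * (Real.exp ((1 - r^2)/2) * r^m)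
      ≤ ∫ r in (0:ℝ)..1, g r := by
    apply intervalIntegral.integral_mono_on (by norm_num)
    · exact (continuous_const.mul hfcont).intervalIntegrable _ _
    · exact hgcont.intervalIntegrable _ _
    · exact hmono
  have hftc : ∫ r in (0:ℝ)..1, g r = G 1 - G 0 := by
    apply intervalIntegral.integral_eq_sub_of_hasDerivAt
    · intro r _; exact hG r
    · exact hgcont.intervalIntegrable _ _
  have hG1 : G 1 = 1 + 1/((m:ℝ)+2) := by
    simp [hGdef]
  have hG0 : G 0 = 0 := by
    simp [hGdef]
  push_cast
  rw [hint]
  calc ∫ r in (0:ℝ)..1, ((m:ℝ)+1) * (Real.exp ((1 - r^2)/2) * r^m)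
      ≤ ∫ r in (0:ℝ)..1, g r := hle
    _ = G 1 - G 0 := hftc
    _ = 1 + 1/((m:ℝ)+2) := by rw [hG1, hG0]; ring
    _ = 1 + 1/((m:ℝ)+1+1) := by ring_nf
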